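/- Let B and C be bicategories and F, G : B ⥤ C pseudofunctors. Suppose given, for every object X of B, a 1-morphism app X : F.obj X ⟶ G.obj X in C, and, for every 1-morphism f : X ⟶ Y in B, an invertible 2-morphism nat f : F.map f ≫ app Y ≅ app X ≫ G.map f, satisfying: (i) (2-naturality) for every 2-morphism η : f ⟶ g in B, (F.map₂ η ▷ app Y) ≫ (nat g).hom = (nat f).hom ≫ (app X ◁ G.map₂ η); and (ii) (compatibility with composition) for all composable 1-morphisms f : X ⟶ Y and g : Y ⟶ Z, (nat (f ≫ g)).hom equals the pasting composite ((F.mapComp f g).hom ▷ app Z) ≫ (α_).hom ≫ (F.map f ◁ (nat g).hom) ≫ (α_).inv ≫ ((nat f).hom ▷ G.map g) ≫ (α_).hom ≫ (app X ◁ (G.mapComp f g).inv). Then the identity-coherence axiom holds automatically: for every object X of B, (nat (𝟙 X)).hom = ((F.mapId X).hom ▷ app X) ≫ (λ_ (app X)).hom ≫ (ρ_ (app X)).inv ≫ (app X ◁ (G.mapId X).inv). In other words, the naturality-at-identities axiom of a strong (pseudonatural) transformation between pseudofunctors is implied by the other two axioms when all naturality 2-cells are invertible. -/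
import Mathlib


open CategoryTheory Bicategory

/-- The identity-coherence axiom of a pseudonatural transformation between
pseudofunctors follows from 2-naturality and compatibility with composition, when
all naturality 2-cells are invertible. -/
theorem pseudonatural_id_coherence {B C : Type*} [Bicategory B] [Bicategory C]
    (F G : Pseudofunctor B C)
    (app : ∀ X : B, F.obj X ⟶ G.obj X)
    (nat : ∀ {X Y : B} (f : X ⟶ Y), F.map f ≫ app Y ≅ app X ≫ G.map f)
    (hnat : ∀ {X Y : B} {f g : X ⟶ Y} (η : f ⟶ g),
      (F.map₂ η ▷ app Y) ≫ (nat g).hom = (nat f).hom ≫ (app X ◁ G.map₂ η))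
    (hcomp : ∀ {X Y Z : B} (f : X ⟶ Y) (g : Y ⟶ Z),
      (nat (f ≫ g)).hom =
        ((F.mapComp f g).hom ▷ app Z) ≫ (α_ (F.map f) (F.map g) (app Z)).hom ≫
          (F.map f ◁ (nat g).hom) ≫ (α_ (F.map f) (app Y) (G.map g)).inv ≫
          ((nat f).hom ▷ G.map g) ≫ (α_ (app X) (G.map f) (G.map g)).hom ≫
          (app X ◁ (G.mapComp f g).inv)) :
    ∀ X : B,
      (nat (𝟙 X)).hom =
        ((F.mapId X).hom ▷ app X) ≫ (λ_ (app X)).hom ≫ (ρ_ (app X)).inv ≫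
          (app X ◁ (G.mapId X).inv) := by
  intro X
  have E := hnat (λ_ (𝟙 X)).hom
  rw [hcomp, F.map₂_left_unitor, G.map₂_left_unitor] at E
  simp only [Bicategory.comp_whiskerRight, Bicategory.whiskerLeft_comp, Category.assoc,
    whiskerLeft_inv_hom_assoc] at E
  have key : (F.mapId X).hom ▷ (app X ≫ G.map (𝟙 X)) ≫ (λ_ (app X ≫ G.map (𝟙 X))).hom =
      (α_ (F.map (𝟙 X)) (app X) (G.map (𝟙 X))).inv ≫
        (nat (𝟙 X)).hom ▷ G.map (𝟙 X) ≫
          (α_ (app X) (G.map (𝟙 X)) (G.map (𝟙 X))).hom ≫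
            app X ◁ (G.mapId X).hom ▷ G.map (𝟙 X) ≫ app X ◁ (λ_ (G.map (𝟙 X))).hom := by
    rw [← cancel_epi (F.map (𝟙 X) ◁ (nat (𝟙 X)).hom),
      ← cancel_epi (α_ (F.map (𝟙 X)) (F.map (𝟙 X)) (app X)).hom,
      ← cancel_epi ((F.mapComp (𝟙 X) (𝟙 X)).hom ▷ app X)]
    rw [whisker_exchange_assoc, ← E]
    bicategory
  have W : (nat (𝟙 X)).hom =
      (ρ_ (F.map (𝟙 X) ≫ app X)).inv ≫
        (F.map (𝟙 X) ≫ app X) ◁ (G.mapId X).inv ≫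
          (nat (𝟙 X)).hom ▷ G.map (𝟙 X) ≫
            (app X ≫ G.map (𝟙 X)) ◁ (G.mapId X).hom ≫ (ρ_ (app X ≫ G.map (𝟙 X))).hom := by
    rw [whisker_exchange_assoc, whiskerLeft_inv_hom_assoc]
    bicategory
  have key2 : (nat (𝟙 X)).hom ▷ G.map (𝟙 X) =
      (α_ (F.map (𝟙 X)) (app X) (G.map (𝟙 X))).hom ≫
        ((F.mapId X).hom ▷ (app X ≫ G.map (𝟙 X)) ≫ (λ_ (app X ≫ G.map (𝟙 X))).hom) ≫
          app X ◁ (λ_ (G.map (𝟙 X))).inv ≫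
            app X ◁ ((G.mapId X).inv ▷ G.map (𝟙 X)) ≫
              (α_ (app X) (G.map (𝟙 X)) (G.map (𝟙 X))).inv := by
    have hj : app X ◁ ((G.mapId X).hom ▷ G.map (𝟙 X)) ≫
        app X ◁ ((G.mapId X).inv ▷ G.map (𝟙 X)) = 𝟙 _ := by
      simp [← Bicategory.whiskerLeft_comp, ← Bicategory.comp_whiskerRight]
    rw [key]
    simp only [Category.assoc, Iso.hom_inv_id_assoc, whiskerLeft_hom_inv_assoc]
    rw [reassoc_of% hj]
    simp
  conv_lhs => rw [W, key2]
  have hb : (λ_ (G.map (𝟙 X))).inv ≫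
      (𝟙 (G.obj X) ◁ (G.mapId X).hom ≫ (G.mapId X).inv ▷ 𝟙 (G.obj X)) ≫
        (ρ_ (G.map (𝟙 X))).hom = 𝟙 (G.map (𝟙 X)) := by
    rw [Category.assoc, rightUnitor_naturality, ← unitors_equal, leftUnitor_naturality_assoc]
    simp
  trans ((ρ_ (F.map (𝟙 X) ≫ app X)).inv ≫ (α_ (F.map (𝟙 X)) (app X) (𝟙 (G.obj X))).hom ≫
      (F.map (𝟙 X) ◁ (app X ◁ (G.mapId X).inv) ≫ (F.mapId X).hom ▷ (app X ≫ G.map (𝟙 X))) ≫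
        (λ_ (app X ≫ G.map (𝟙 X))).hom ≫ app X ◁ (λ_ (G.map (𝟙 X))).inv ≫
          app X ◁ ((G.mapId X).inv ▷ G.map (𝟙 X)) ≫
            (α_ (app X) (G.map (𝟙 X)) (G.map (𝟙 X))).inv ≫
              (app X ≫ G.map (𝟙 X)) ◁ (G.mapId X).hom ≫ (ρ_ (app X ≫ G.map (𝟙 X))).hom)
  · bicategory
  rw [whisker_exchange]
  trans (((F.mapId X).hom ▷ app X ≫ (λ_ (app X)).hom ≫ (ρ_ (app X)).inv ≫
      app X ◁ (G.mapId X).inv) ≫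
        app X ◁ ((λ_ (G.map (𝟙 X))).inv ≫
          ((G.mapId X).inv ▷ G.map (𝟙 X) ≫ G.map (𝟙 X) ◁ (G.mapId X).hom) ≫
            (ρ_ (G.map (𝟙 X))).hom))
  · bicategory
  rw [← whisker_exchange, hb]
  simp
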